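/- Let X be the Hermitian curve over F_{q^2}. Fix integers d ≥ s ≥ 1, distinct points P_1, ..., P_s ∈ X(F_{q^2}), and integers b_1, ..., b_s with 0 ≤ b_i ≤ d + 2 − i and b_i ≤ q + 1 for all i. Let E = Σ b_i P_i, viewed as a zero-dimensional subscheme of P^2 of degree Σ b_i. Then h^1(P^2, I_E(d)) = 0. -/

import Mathlib

open MvPolynomial Polynomial

/-- The Hermitian curve over `F_{q²}`: the projectivization of the affine
equation `y + y^q = x^{q+1}` (coordinates `x = X 0`, `y = X 1`, `z = X 2`). -/
noncomputable def hermitianPoly (F : Type*) [Field F] (q : ℕ) : MvPolynomial (Fin 3) F :=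
  MvPolynomial.X 1 * MvPolynomial.X 2 ^ q + MvPolynomial.X 1 ^ q * MvPolynomial.X 2
    - MvPolynomial.X 0 ^ (q + 1)


section Vec
variable {F : Type*} [Field F]

/-- dot product on `F³`. -/
def dot3 (z u : Fin 3 → F) : F := z 0 * u 0 + z 1 * u 1 + z 2 * u 2

/-- cross product on `F³`. -/
def cr3 (u w : Fin 3 → F) : Fin 3 → F :=
  ![u 1 * w 2 - u 2 * w 1, u 2 * w 0 - u 0 * w 2, u 0 * w 1 - u 1 * w 0]

lemma cr3_eq_zero {u w : Fin 3 → F} (hu : u ≠ 0) (h : cr3 u w = 0) : ∃ c : F, w = c • u := by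
  have e0 : u 1 * w 2 - u 2 * w 1 = 0 := by simpa [cr3] using congrFun h 0
  have e1 : u 2 * w 0 - u 0 * w 2 = 0 := by simpa [cr3] using congrFun h 1
  have e2 : u 0 * w 1 - u 1 * w 0 = 0 := by simpa [cr3] using congrFun h 2
  have k01 : w 0 * u 1 = w 1 * u 0 := by linear_combination -e2
  have k02 : w 0 * u 2 = w 2 * u 0 := by linear_combination e1
  have k12 : w 1 * u 2 = w 2 * u 1 := by linear_combination -e0
  have key : ∀ a l : Fin 3, w l * u a = w a * u l := by
    intro a l
    fin_cases a <;> fin_cases l <;>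
      first
        | rfl
        | exact k01 | exact k01.symm
        | exact k02 | exact k02.symm
        | exact k12 | exact k12.symm
  obtain ⟨a, ha⟩ := Function.ne_iff.mp hu
  have ha : u a ≠ 0 := by simpa using ha
  refine ⟨w a / u a, funext fun l => ?_⟩
  simp only [Pi.smul_apply, smul_eq_mul]
  field_simp
  linear_combination key a l

lemma triple3 (x u w : Fin 3 → F) (l : Fin 3) :
    cr3 x (cr3 u w) l = dot3 x w * u l - dot3 x u * w l := by
  fin_cases l <;> simp [cr3, dot3] <;> ring

lemma cr3_swap (u w : Fin 3 → F) (l : Fin 3) : cr3 w u l = - cr3 u w l := by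
  fin_cases l <;> simp [cr3] <;> ring

end Vec

section Herm
variable {F : Type*} [Field F] [Fintype F] {p k q : ℕ}

/-- The Hermitian sesquilinear pairing. -/
def hB (q : ℕ) (u w : Fin 3 → F) : F := u 1 * w 2 ^ q + u 2 * w 1 ^ q - u 0 * w 0 ^ q

/-- coefficient vector of the linear functional `x ↦ hB q x w`. -/
def conjVec (q : ℕ) (w : Fin 3 → F) : Fin 3 → F := ![-(w 0 ^ q), w 2 ^ q, w 1 ^ q]

lemma dot3_conjVec (q : ℕ) (w u : Fin 3 → F) : dot3 (conjVec q w) u = hB q u w := by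
  simp [dot3, conjVec, hB]; ring

lemma pow_qq (hcard : Fintype.card F = q ^ 2) (a : F) : (a ^ q) ^ q = a := by
  rw [← pow_mul, ← pow_two, ← hcard, FiniteField.pow_card]

lemma hB_frob [CharP F p] (hp : p.Prime) (hq : q = p ^ k)
    (hcard : Fintype.card F = q ^ 2) (u w : Fin 3 → F) :
    (hB q u w) ^ q = hB q w u := by
  haveI : Fact p.Prime := ⟨hp⟩
  have h2 : ∀ a : F, (a ^ q) ^ q = a := pow_qq hcard
  subst hq
  simp only [hB]
  rw [sub_pow_char_pow, add_pow_char_pow, mul_pow, mul_pow, mul_pow, h2, h2, h2]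
  ring

lemma herm_prop [CharP F p] (hp : p.Prime) (hk : 0 < k) (hq : q = p ^ k)
    (hcard : Fintype.card F = q ^ 2) {u w : Fin 3 → F} (hu : u ≠ 0)
    (huu : hB q u u = 0) (hwu : hB q w u = 0) (huw : hB q u w = 0) (hww : hB q w w = 0) :
    ∃ t : F, w = t • u := by
  have hqpos : 0 < q := hq ▸ pow_pos hp.pos k
  by_cases hcr : cr3 u w = 0
  · exact cr3_eq_zero hu hcr
  · have hα : cr3 (conjVec q u) (cr3 u w) = 0 := funext fun l => by
      rw [triple3, dot3_conjVec, dot3_conjVec, huu, hwu]; simp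
    have hβ : cr3 (conjVec q w) (cr3 u w) = 0 := funext fun l => by
      rw [triple3, dot3_conjVec, dot3_conjVec, hww, huw]; simp
    have hα' : cr3 (cr3 u w) (conjVec q u) = 0 := funext fun l => by
      rw [cr3_swap, congrFun hα l]; simp
    have hβ' : cr3 (cr3 u w) (conjVec q w) = 0 := funext fun l => by
      rw [cr3_swap, congrFun hβ l]; simp
    obtain ⟨c1, hc1⟩ := cr3_eq_zero hcr hα'
    obtain ⟨c2, hc2⟩ := cr3_eq_zero hcr hβ'
    have hαne : conjVec q u ≠ 0 := by
      intro h0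
      apply hu
      funext a
      have hcomp : ∀ l : Fin 3, conjVec q u l = 0 := fun l => congrFun h0 l
      have c0 : u 0 ^ q = 0 := by have := hcomp 0; simpa [conjVec] using this
      have c1' : u 2 ^ q = 0 := by have := hcomp 1; simpa [conjVec] using this
      have c2' : u 1 ^ q = 0 := by have := hcomp 2; simpa [conjVec] using this
      have z0 : u 0 = 0 := pow_eq_zero_iff hqpos.ne' |>.mp c0
      have z2 : u 2 = 0 := pow_eq_zero_iff hqpos.ne' |>.mp c1'
      have z1 : u 1 = 0 := pow_eq_zero_iff hqpos.ne' |>.mp c2'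
      fin_cases a <;> simpa using (by assumption : _)
    have hc1ne : c1 ≠ 0 := by
      intro h0
      exact hαne (by rw [hc1, h0, zero_smul])
    set t := c2 / c1 with ht
    have hβα : ∀ l, conjVec q w l = t * conjVec q u l := by
      intro l
      have a1 := congrFun hc1 l
      have a2 := congrFun hc2 l
      simp only [Pi.smul_apply, smul_eq_mul] at a1 a2
      rw [a1, a2, ht]
      field_simp
    have h0' : w 0 ^ q = t * u 0 ^ q := by
      have := hβα 0
      simp only [conjVec, Matrix.cons_val_zero, mul_neg] at this
      exact neg_inj.mp this
    have h2' : w 2 ^ q = t * u 2 ^ q := by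
      simpa [conjVec] using hβα 1
    have h1' : w 1 ^ q = t * u 1 ^ q := by
      simpa [conjVec] using hβα 2
    have hcoord : ∀ a bb : F, a ^ q = t * bb ^ q → a = t ^ q * bb := by
      intro a bb hab
      have := congrArg (· ^ q) hab
      simp only [mul_pow] at this
      rw [pow_qq hcard, pow_qq hcard] at this
      exact this
    refine ⟨t ^ q, funext fun l => ?_⟩
    simp only [Pi.smul_apply, smul_eq_mul]
    fin_cases l
    · exact hcoord _ _ h0'
    · exact hcoord _ _ h1'
    · exact hcoord _ _ h2'


lemma hB_self_of_eval (q : ℕ) (u : Fin 3 → F)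
    (h : eval u (hermitianPoly F q) = 0) : hB q u u = 0 := by
  simp only [hermitianPoly, map_sub, map_add, map_mul, map_pow, MvPolynomial.eval_X] at h
  rw [pow_succ] at h
  simp only [hB]
  linear_combination h

lemma hB_tan (q : ℕ) (hq0 : (q : F) = 0) (u w : Fin 3 → F)
    (h : ∑ j, eval u (pderiv j (hermitianPoly F q)) * w j = 0) :
    hB q w u = 0 := by
  simp [hermitianPoly, Fin.sum_univ_three, Derivation.leibniz, pderiv_pow, pderiv_X, Pi.single_apply,
    hq0] at h
  simp only [hB]
  linear_combination h

/-- generic linear form in three variables. -/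
noncomputable def linForm (z : Fin 3 → F) : MvPolynomial (Fin 3) F :=
  MvPolynomial.C (z 0) * MvPolynomial.X 0 + MvPolynomial.C (z 1) * MvPolynomial.X 1
    + MvPolynomial.C (z 2) * MvPolynomial.X 2

lemma linForm_isHomogeneous (z : Fin 3 → F) : (linForm z).IsHomogeneous 1 := by
  have h : ∀ (c : F) (i : Fin 3), (MvPolynomial.C c * MvPolynomial.X i :
      MvPolynomial (Fin 3) F).IsHomogeneous 1 := fun c i => by
    simpa using (isHomogeneous_C (Fin 3) c).mul (isHomogeneous_X F i)
  exact ((h _ 0).add (h _ 1)).add (h _ 2)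

lemma aeval_linForm (a bv z : Fin 3 → F) :
    MvPolynomial.aeval (fun j => Polynomial.C (a j) + Polynomial.X * Polynomial.C (bv j))
      (linForm z)
    = Polynomial.C (dot3 z a) + Polynomial.C (dot3 z bv) * Polynomial.X := by
  simp only [linForm, dot3, map_add, map_mul, MvPolynomial.aeval_X, MvPolynomial.aeval_C,
    Polynomial.algebraMap_eq, Polynomial.C_add, Polynomial.C_mul]
  ring

end Herm

section Tri
variable {F : Type*} [Field F]

lemma triangular_mem {s : ℕ} {b : Fin s → ℕ}
    (V : Submodule F (Π i : Fin s, Fin (b i) → F))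
    (r : Π i : Fin s, Fin (b i) → ℕ)
    (hmono : ∀ (i i' : Fin s) (m : Fin (b i)) (m' : Fin (b i')), i < i' → r i m < r i' m')
    (hinj2 : ∀ (i : Fin s) (m m' : Fin (b i)), r i m = r i m' → m = m')
    (hx : ∀ (i : Fin s) (m : Fin (b i)), ∃ x ∈ V, x i m ≠ 0 ∧
      ∀ (i' : Fin s) (m' : Fin (b i')), r i' m' < r i m → x i' m' = 0)
    (y : Π i : Fin s, Fin (b i) → F) : y ∈ V := by
  set N : ℕ := (Finset.univ.sup fun i : Fin s => Finset.univ.sup fun m : Fin (b i) => r i m) + 1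
    with hN
  have hrN : ∀ (i : Fin s) (m : Fin (b i)), r i m < N := by
    intro i m
    have h1 : r i m ≤ Finset.univ.sup fun m : Fin (b i) => r i m :=
      Finset.le_sup (Finset.mem_univ m)
    have h2 : (Finset.univ.sup fun m : Fin (b i) => r i m) ≤
        Finset.univ.sup fun i : Fin s => Finset.univ.sup fun m : Fin (b i) => r i m :=
      Finset.le_sup (f := fun i : Fin s => Finset.univ.sup fun m : Fin (b i) => r i m)
        (Finset.mem_univ i)
    omega
  suffices H : ∀ (j : ℕ) (y : Π i : Fin s, Fin (b i) → F),
      (∀ (i : Fin s) (m : Fin (b i)), r i m + j < N → y i m = 0) → y ∈ V by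
    exact H N y (fun i m h => absurd h (by omega))
  intro j
  induction j with
  | zero =>
    intro y hy
    have : y = 0 := by
      funext i m
      exact hy i m (by simpa using hrN i m)
    rw [this]; exact V.zero_mem
  | succ j ih =>
    intro y hy
    by_cases hex : ∃ (i : Fin s) (m : Fin (b i)), r i m + (j + 1) = N
    · obtain ⟨i, m, him⟩ := hex
      obtain ⟨x, hxV, hx0, hxlt⟩ := hx i m
      have key : ∀ (i' : Fin s) (m' : Fin (b i')), r i' m' + j < N →
          (y - (y i m / x i m) • x) i' m' = 0 := by
        intro i' m' h
        simp only [Pi.sub_apply, Pi.smul_apply, smul_eq_mul]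
        rcases Nat.lt_or_ge (r i' m' + (j + 1)) N with hlt | hge
        · rw [hy i' m' hlt, hxlt i' m' (by omega), mul_zero, sub_zero]
        · have heq : r i' m' = r i m := by omega
          have hii : i' = i := by
            rcases lt_trichotomy i' i with hcase | hcase | hcase
            · exact absurd (hmono i' i m' m hcase) (by omega)
            · exact hcase
            · exact absurd (hmono i i' m m' hcase) (by omega)
          subst hii
          have hmm : m' = m := hinj2 _ _ _ heq
          subst hmm
          rw [div_mul_cancel₀ _ hx0, sub_self]
      have h1 : (y - (y i m / x i m) • x) ∈ V := ih _ key
      have h2 := V.add_mem h1 (V.smul_mem (y i m / x i m) hxV)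
      simpa using h2
    · push_neg at hex
      exact ih y fun i m h => hy i m (by have := hex i m; omega)

end Tri

section Extra
variable {F : Type*} [Field F]

lemma exists_lin {u w : Fin 3 → F} (hu : u ≠ 0) (hind : ∀ c : F, w ≠ c • u) :
    ∃ z : Fin 3 → F, dot3 z u = 0 ∧ dot3 z w ≠ 0 := by
  have hcr : cr3 u w ≠ 0 := by
    intro h
    obtain ⟨c, hc⟩ := cr3_eq_zero hu h
    exact hind c hc
  obtain ⟨l, hl⟩ := Function.ne_iff.mp hcr
  have hl : cr3 u w l ≠ 0 := by simpa using hl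
  fin_cases l
  · refine ⟨![0, -(u 2), u 1], by simp [dot3]; ring, fun h0 => hl ?_⟩
    simp [dot3] at h0
    simp only [cr3]
    show u 1 * w 2 - u 2 * w 1 = 0
    first
      | linear_combination h0
      | linear_combination -h0
  · refine ⟨![u 2, 0, -(u 0)], by simp [dot3]; ring, fun h0 => hl ?_⟩
    simp [dot3] at h0
    simp only [cr3]
    show u 2 * w 0 - u 0 * w 2 = 0
    first
      | linear_combination h0
      | linear_combination -h0
  · refine ⟨![-(u 1), u 0, 0], by simp [dot3]; ring, fun h0 => hl ?_⟩
    simp [dot3] at h0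
    simp only [cr3]
    show u 0 * w 1 - u 1 * w 0 = 0
    first
      | linear_combination h0
      | linear_combination -h0

lemma exists_nonzero_lin {u : Fin 3 → F} (hu : u ≠ 0) :
    ∃ z : Fin 3 → F, dot3 z u ≠ 0 := by
  obtain ⟨a, ha⟩ := Function.ne_iff.mp hu
  have ha : u a ≠ 0 := by simpa using ha
  fin_cases a
  · exact ⟨![1, 0, 0], by simpa [dot3] using ha⟩
  · exact ⟨![0, 1, 0], by simpa [dot3] using ha⟩
  · exact ⟨![0, 0, 1], by simpa [dot3] using ha⟩

end Extra

/-- Fix `d ≥ s ≥ 1`, distinct rational points `P₁, …, P_s` on the Hermitian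
curve `X` and integers `0 ≤ bᵢ ≤ d + 2 - i`, `bᵢ ≤ q + 1`.  Let
`E = Σ bᵢ Pᵢ`, viewed as a zero-dimensional subscheme of `ℙ²` of degree
`Σ bᵢ`; since each `bᵢ ≤ q + 1`, the connected component of `E` at `Pᵢ` is the
curvilinear scheme of length `bᵢ` on the tangent line `L_{X,Pᵢ}`
(parametrized by `t ↦ Pᵢ + t·vᵢ` for a tangent direction `vᵢ`).  Then
`h¹(ℙ², I_E(d)) = 0`, i.e. `E` imposes independent conditions on degree-`d`
forms: the linear map sending a degree-`d` form `g` to the first `bᵢ` Taylor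
coefficients of its restriction to each tangent line is surjective. -/
theorem hermitian_h1_vanishing (F : Type*) [Field F] [Fintype F]
    (p k q : ℕ) (hp : p.Prime) [CharP F p] (hk : 0 < k) (hq : q = p ^ k)
    (hcard : Fintype.card F = q ^ 2)
    (d s : ℕ) (hs1 : 1 ≤ s) (hsd : s ≤ d)
    (P : Fin s → (Fin 3 → F)) (hP0 : ∀ i, P i ≠ 0)
    (hPX : ∀ i, eval (P i) (hermitianPoly F q) = 0)
    (hdist : ∀ i j, i ≠ j → ∀ t : F, P i ≠ t • P j)
    (b : Fin s → ℕ) (hb1 : ∀ i : Fin s, b i + i.val ≤ d + 1) (hb2 : ∀ i, b i ≤ q + 1)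
    (v : Fin s → (Fin 3 → F))
    (hvtan : ∀ i, ∑ j, eval (P i) (pderiv j (hermitianPoly F q)) * v i j = 0)
    (hvind : ∀ i, ∀ t : F, v i ≠ t • P i) :
    Function.Surjective
      (fun (g : homogeneousSubmodule (Fin 3) F d) (i : Fin s) (m : Fin (b i)) =>
        (MvPolynomial.aeval
            (fun j => Polynomial.C (P i j) + Polynomial.X * Polynomial.C (v i j))
            (g : MvPolynomial (Fin 3) F)).coeff m) := by
  haveI : Fact p.Prime := ⟨hp⟩
  have hq0 : (q : F) = 0 := by
    rw [hq, Nat.cast_pow, CharP.cast_eq_zero F p]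
    exact zero_pow hk.ne'
  have hqpos : 0 < q := hq ▸ pow_pos hp.pos k
  have hBPP : ∀ i, hB q (P i) (P i) = 0 := fun i => hB_self_of_eval q (P i) (hPX i)
  have hBvP : ∀ i, hB q (v i) (P i) = 0 := fun i => hB_tan q hq0 (P i) (v i) (hvtan i)
  have hBne : ∀ i j, i ≠ j → hB q (P i) (P j) ≠ 0 := by
    intro i j hij hzero
    have h1 : hB q (P j) (P i) = 0 := by
      have hf := hB_frob (k := k) hp hq hcard (P i) (P j)
      rw [hzero, zero_pow hqpos.ne'] at hf
      exact hf.symm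
    obtain ⟨t, ht⟩ := herm_prop hp hk hq hcard (hP0 i) (hBPP i) h1 hzero (hBPP j)
    exact hdist j i hij.symm t ht
  -- the linear map
  set Φ : (homogeneousSubmodule (Fin 3) F d) →ₗ[F] (Π i : Fin s, Fin (b i) → F) :=
    { toFun := fun g i m =>
        (MvPolynomial.aeval
          (fun j => Polynomial.C (P i j) + Polynomial.X * Polynomial.C (v i j))
          (g : MvPolynomial (Fin 3) F)).coeff m
      map_add' := by
        intro g h
        funext i m
        simp [Polynomial.coeff_add]
      map_smul' := by
        intro c g
        funext i m
        simp [Polynomial.coeff_smul] } with hΦ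
  intro y
  -- the rank function
  set bb : ℕ → ℕ := fun n => if h : n < s then b ⟨n, h⟩ else 0 with hbb
  set r : Π i : Fin s, Fin (b i) → ℕ :=
    fun i m => (∑ n ∈ Finset.range i.val, bb n) + m.val with hr
  have hbbval : ∀ i : Fin s, bb i.val = b i := by
    intro i
    simp only [hbb, i.isLt, dif_pos, Fin.eta]
  have hmono : ∀ (i i' : Fin s) (m : Fin (b i)) (m' : Fin (b i')), i < i' → r i m < r i' m' := by
    intro i i' m m' hii'
    have h1 : (∑ n ∈ Finset.range i.val, bb n) + bb i.val ≤ ∑ n ∈ Finset.range i'.val, bb n := by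
      rw [← Finset.sum_range_succ]
      exact Finset.sum_le_sum_of_subset (Finset.range_subset_range.mpr (by omega))
    have hm : m.val < bb i.val := by rw [hbbval]; exact m.isLt
    simp only [hr]
    omega
  have hinj2 : ∀ (i : Fin s) (m m' : Fin (b i)), r i m = r i m' → m = m' := by
    intro i m m' h
    simp only [hr] at h
    exact Fin.ext (by omega)
  have hy : y ∈ LinearMap.range Φ := by
    apply triangular_mem (LinearMap.range Φ) r hmono hinj2 ?_ y
    intro i m
    obtain ⟨zm, hzm⟩ := exists_nonzero_lin (hP0 i)
    obtain ⟨zl, hzlP, hzlv⟩ := exists_lin (hP0 i) (hvind i)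
    have hmi : m.val + i.val ≤ d := by
      have := hb1 i
      have := m.isLt
      omega
    set e : ℕ := d - m.val - i.val with he
    set g : MvPolynomial (Fin 3) F :=
      linForm zm ^ e * (linForm zl ^ m.val *
        ∏ j ∈ Finset.Iio i, linForm (conjVec q (P j))) with hg
    have hghom : g ∈ homogeneousSubmodule (Fin 3) F d := by
      rw [mem_homogeneousSubmodule]
      have h1 := (linForm_isHomogeneous zm).pow e
      have h2 := (linForm_isHomogeneous zl).pow m.val
      have h3 := MvPolynomial.IsHomogeneous.prod (Finset.Iio i)
        (fun j => linForm (conjVec q (P j))) (fun _ => 1)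
        (fun j _ => linForm_isHomogeneous (conjVec q (P j)))
      have h4 := h1.mul (h2.mul h3)
      have hdeg : 1 * e + (1 * m.val + ∑ _j ∈ Finset.Iio i, 1) = d := by
        simp only [Finset.sum_const, smul_eq_mul, mul_one, one_mul, Fin.card_Iio]
        omega
      rw [← hdeg]
      exact h4
    -- restriction formula
    have hRfor : ∀ i' : Fin s,
        (MvPolynomial.aeval
          (fun j => Polynomial.C (P i' j) + Polynomial.X * Polynomial.C (v i' j)) g)
        = (Polynomial.C (dot3 zm (P i')) + Polynomial.C (dot3 zm (v i')) * Polynomial.X) ^ e *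
          ((Polynomial.C (dot3 zl (P i')) + Polynomial.C (dot3 zl (v i')) * Polynomial.X) ^ m.val *
            ∏ j ∈ Finset.Iio i,
              (Polynomial.C (hB q (P i') (P j)) + Polynomial.C (hB q (v i') (P j)) * Polynomial.X)) := by
      intro i'
      rw [hg]
      rw [map_mul, map_pow, map_mul, map_pow, map_prod]
      rw [aeval_linForm, aeval_linForm]
      congr 2
      refine Finset.prod_congr rfl fun j _ => ?_
      rw [aeval_linForm, dot3_conjVec, dot3_conjVec]
    refine ⟨Φ ⟨g, hghom⟩, ⟨⟨g, hghom⟩, rfl⟩, ?_, ?_⟩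
    · -- diagonal coefficient nonzero
      rw [hΦ]
      simp only [LinearMap.coe_mk, AddHom.coe_mk]
      rw [hRfor i, hzlP]
      have hrw : (Polynomial.C (0:F) + Polynomial.C (dot3 zl (v i)) * Polynomial.X) ^ m.val *
            ∏ j ∈ Finset.Iio i,
              (Polynomial.C (hB q (P i) (P j)) + Polynomial.C (hB q (v i) (P j)) * Polynomial.X)
          = (Polynomial.C ((dot3 zl (v i)) ^ m.val) *
            ∏ j ∈ Finset.Iio i,
              (Polynomial.C (hB q (P i) (P j)) + Polynomial.C (hB q (v i) (P j)) * Polynomial.X))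
            * Polynomial.X ^ m.val := by
        rw [Polynomial.C_0, zero_add, mul_pow, ← Polynomial.C_pow]
        ring
      rw [hrw, ← mul_assoc]
      rw [Polynomial.coeff_mul_X_pow']
      simp only [le_refl, if_true, Nat.sub_self]
      rw [Polynomial.coeff_zero_eq_eval_zero]
      simp only [Polynomial.eval_mul, Polynomial.eval_pow, Polynomial.eval_add,
        Polynomial.eval_C, Polynomial.eval_X, Polynomial.eval_prod, mul_zero, add_zero]
      refine mul_ne_zero (pow_ne_zero _ hzm) (mul_ne_zero (pow_ne_zero _ hzlv) ?_)
      rw [Finset.prod_ne_zero_iff]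
      intro j hj
      exact hBne i j (Finset.mem_Iio.mp hj).ne'
    · -- triangular vanishing
      intro i' m' hlt
      rw [hΦ]
      simp only [LinearMap.coe_mk, AddHom.coe_mk]
      rcases lt_trichotomy i' i with hc | hc | hc
      · rw [hRfor i']
        have hz : (Polynomial.C (hB q (P i') (P i')) +
            Polynomial.C (hB q (v i') (P i')) * Polynomial.X) = 0 := by
          rw [hBPP i', hBvP i']
          simp
        rw [Finset.prod_eq_zero (Finset.mem_Iio.mpr hc) hz]
        simp
      · subst hc
        have hmm : m'.val < m.val := by
          simp only [hr] at hlt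
          omega
        rw [hRfor i', hzlP]
        have hrw : (Polynomial.C (0:F) + Polynomial.C (dot3 zl (v i')) * Polynomial.X) ^ m.val *
              ∏ j ∈ Finset.Iio i',
                (Polynomial.C (hB q (P i') (P j)) + Polynomial.C (hB q (v i') (P j)) * Polynomial.X)
            = (Polynomial.C ((dot3 zl (v i')) ^ m.val) *
              ∏ j ∈ Finset.Iio i',
                (Polynomial.C (hB q (P i') (P j)) + Polynomial.C (hB q (v i') (P j)) * Polynomial.X))
              * Polynomial.X ^ m.val := by
          rw [Polynomial.C_0, zero_add, mul_pow, ← Polynomial.C_pow]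
          ring
        rw [hrw, ← mul_assoc]
        rw [Polynomial.coeff_mul_X_pow']
        rw [if_neg (by omega)]
      · exact absurd (hmono i i' m m' hc) (by omega)
  obtain ⟨g, hgy⟩ := hy
  exact ⟨g, hgy⟩
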